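/- For every p ∈ (1,2) there exists a constant C = C(p) > 0, depending only on p, such that for every positive integer n and every s ∈ ℝ, |Φ_n'(s)|² ≤ C · Φ_n''(s) · Φ_n(s). -/

import Mathlib

open Filter Set

/-- The `C²` regularization of `s ↦ |s|^p` from the proof of Lemma 3.2. -/
noncomputable def Phi (p : ℝ) (n : ℕ) (s : ℝ) : ℝ :=
  if 1 / (n : ℝ) < |s| then |s| ^ p
  else p * (p - 2) / (8 * (n : ℝ) ^ p) * ((n : ℝ) ^ 2 * s ^ 2 - 1) ^ 2
      + p / (2 * (n : ℝ) ^ p) * ((n : ℝ) ^ 2 * s ^ 2 - 1) + 1 / (n : ℝ) ^ p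

noncomputable def Pin (p N s : ℝ) : ℝ :=
  p * (p - 2) / (8 * N ^ p) * (N ^ 2 * s ^ 2 - 1) ^ 2
    + p / (2 * N ^ p) * (N ^ 2 * s ^ 2 - 1) + 1 / N ^ p

noncomputable def gin (p N s : ℝ) : ℝ :=
  p * (p - 2) / (2 * N ^ p) * (N ^ 2 * s * (N ^ 2 * s ^ 2 - 1)) + p * N ^ 2 / N ^ p * s

noncomputable def hin (p N s : ℝ) : ℝ :=
  p * (p - 2) / (2 * N ^ p) * (N ^ 2 * (3 * (N ^ 2 * s ^ 2) - 1)) + p * N ^ 2 / N ^ p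

noncomputable def gPhi (p : ℝ) (n : ℕ) (s : ℝ) : ℝ :=
  if 1 / (n : ℝ) < |s| then p * |s| ^ (p - 2) * s else gin p (n : ℝ) s

noncomputable def hPhi (p : ℝ) (n : ℕ) (s : ℝ) : ℝ :=
  if 1 / (n : ℝ) < |s| then p * (p - 1) * |s| ^ (p - 2) else hin p (n : ℝ) s

lemma Phi_eq (p : ℝ) (n : ℕ) (s : ℝ) :
    Phi p n s = if 1 / (n : ℝ) < |s| then |s| ^ p else Pin p (n : ℝ) s := rfl

lemma sq_hasDeriv (N s : ℝ) : HasDerivAt (fun y : ℝ => N ^ 2 * y ^ 2 - 1) (N ^ 2 * (2 * s)) s := by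
  simpa using ((hasDerivAt_pow 2 s).const_mul (N ^ 2)).sub_const 1

lemma Pin_hasDeriv (p N s : ℝ) : HasDerivAt (Pin p N) (gin p N s) s := by
  have hq := sq_hasDeriv N s
  have h := (((hq.pow 2).const_mul (p * (p - 2) / (8 * N ^ p))).add
    (hq.const_mul (p / (2 * N ^ p)))).add_const (1 / N ^ p)
  have e : gin p N s = p * (p - 2) / (8 * N ^ p) * (2 * (N ^ 2 * s ^ 2 - 1) ^ 1 * (N ^ 2 * (2 * s)))
      + p / (2 * N ^ p) * (N ^ 2 * (2 * s)) := by
    unfold gin; ring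
  exact h.congr_deriv e.symm

lemma gin_hasDeriv (p N s : ℝ) : HasDerivAt (gin p N) (hin p N s) s := by
  have h1 : HasDerivAt (fun y : ℝ => N ^ 2 * y * (N ^ 2 * y ^ 2 - 1))
      (N ^ 2 * (N ^ 2 * s ^ 2 - 1) + N ^ 2 * s * (N ^ 2 * (2 * s))) s := by
    have ha : HasDerivAt (fun y : ℝ => N ^ 2 * y) (N ^ 2) s := by
      simpa using (hasDerivAt_id s).const_mul (N ^ 2)
    exact ha.mul (sq_hasDeriv N s)
  have h := ((h1.const_mul (p * (p - 2) / (2 * N ^ p)))).add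
    (((hasDerivAt_id s).const_mul (p * N ^ 2 / N ^ p)))
  have e : hin p N s = p * (p - 2) / (2 * N ^ p) * (N ^ 2 * (N ^ 2 * s ^ 2 - 1) + N ^ 2 * s * (N ^ 2 * (2 * s)))
      + p * N ^ 2 / N ^ p * 1 := by
    unfold hin; ring
  exact h.congr_deriv e.symm

lemma one_div_rpow_eq {N q : ℝ} (hN : 0 < N) : (1 / N) ^ q = 1 / N ^ q := by
  rw [Real.div_rpow zero_le_one hN.le, Real.one_rpow]

lemma rpow_sub_one_eq {N : ℝ} (hN : 0 < N) (q : ℝ) : N ^ (q - 1) = N ^ q / N := by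
  rw [Real.rpow_sub hN, Real.rpow_one]

lemma rpow_sub_two_eq {N : ℝ} (hN : 0 < N) (q : ℝ) : N ^ (q - 2) = N ^ q / N ^ 2 := by
  rw [Real.rpow_sub hN, show ((2:ℝ)) = ((2:ℕ):ℝ) by norm_num, Real.rpow_natCast]

lemma aux_abs_rpow (q : ℝ) {s : ℝ} (hs : s ≠ 0) :
    HasDerivAt (fun y : ℝ => |y| ^ q) (q * |s| ^ (q - 2) * s) s := by
  rcases hs.lt_or_gt with h | h
  · have hne : -s ≠ 0 := by simp [hs]
    have h1 : HasDerivAt (fun y : ℝ => (-y) ^ q) (q * (-s) ^ (q - 1) * (-1)) s :=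
      (Real.hasDerivAt_rpow_const (p := q) (Or.inl hne)).comp s (hasDerivAt_neg s)
    have h2 : HasDerivAt (fun y : ℝ => |y| ^ q) (q * (-s) ^ (q - 1) * (-1)) s := by
      apply h1.congr_of_eventuallyEq
      filter_upwards [isOpen_Iio.eventually_mem h] with y hy
      rw [abs_of_neg hy]
    convert h2 using 1
    rw [show q - 1 = q - 2 + 1 by ring, Real.rpow_add_one hne, abs_of_neg h]
    ring
  · have h1 : HasDerivAt (fun y : ℝ => |y| ^ q) (q * s ^ (q - 1)) s := by
      apply (Real.hasDerivAt_rpow_const (p := q) (Or.inl hs)).congr_of_eventuallyEq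
      filter_upwards [isOpen_Ioi.eventually_mem h] with y hy
      rw [abs_of_pos hy]
    convert h1 using 1
    rw [show q - 1 = q - 2 + 1 by ring, Real.rpow_add_one hs, abs_of_pos h]
    ring

lemma aux_abs_rpow_mul (q : ℝ) {s : ℝ} (hs : s ≠ 0) :
    HasDerivAt (fun y : ℝ => |y| ^ q * y) ((q + 1) * |s| ^ q) s := by
  have h := (aux_abs_rpow q hs).mul (hasDerivAt_id s)
  simp only [id_eq, mul_one] at h
  have habs : |s| ≠ 0 := abs_ne_zero.mpr hs
  have h2 : |s| ^ (q - 2) * (s * s) = |s| ^ q := by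
    have e : s * s = |s| * |s| := (abs_mul_abs_self s).symm
    rw [e, ← mul_assoc, ← Real.rpow_add_one habs, ← Real.rpow_add_one habs]
    ring_nf
  have e : (q + 1) * |s| ^ q = q * |s| ^ (q - 2) * s * s + |s| ^ q := by
    linear_combination -q * h2
  exact h.congr_deriv e.symm

lemma glueDeriv {f f₁ f₂ : ℝ → ℝ} {x d : ℝ} (h₁ : HasDerivAt f₁ d x) (h₂ : HasDerivAt f₂ d x)
    (hle : ∀ᶠ y in nhds x, y ≤ x → f y = f₁ y) (hge : ∀ᶠ y in nhds x, x ≤ y → f y = f₂ y) :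
    HasDerivAt f d x := by
  have e1 : f =ᶠ[nhdsWithin x (Set.Iic x)] f₁ := by
    filter_upwards [nhdsWithin_le_nhds hle, self_mem_nhdsWithin] with y h hy using h hy
  have e2 : f =ᶠ[nhdsWithin x (Set.Ici x)] f₂ := by
    filter_upwards [nhdsWithin_le_nhds hge, self_mem_nhdsWithin] with y h hy using h hy
  have hfx : f x = f₁ x := hle.self_of_nhds le_rfl
  have hfx2 : f x = f₂ x := hge.self_of_nhds le_rfl
  have w1 : HasDerivWithinAt f d (Set.Iic x) x :=
    (h₁.hasDerivWithinAt).congr_of_eventuallyEq e1 hfx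
  have w2 : HasDerivWithinAt f d (Set.Ici x) x :=
    (h₂.hasDerivWithinAt).congr_of_eventuallyEq e2 hfx2
  have h := w1.union w2
  rw [Set.Iic_union_Ici] at h
  exact hasDerivWithinAt_univ.mp h

lemma hasDerivAt_Phi' {p : ℝ} (hp1 : 1 < p) {n : ℕ} (hn : 0 < n) (s : ℝ) :
    HasDerivAt (Phi p n) (gPhi p n s) s := by
  have hN : (0:ℝ) < (n:ℝ) := Nat.cast_pos.mpr hn
  have hNp : (0:ℝ) < (n:ℝ) ^ p := Real.rpow_pos_of_pos hN p
  have hpos : (0:ℝ) < 1 / (n:ℝ) := by positivity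
  rcases lt_trichotomy (1 / (n:ℝ)) |s| with hs | hs | hs
  · -- outer region
    have hev : Phi p n =ᶠ[nhds s] fun y => |y| ^ p := by
      have hop : IsOpen {y : ℝ | 1 / (n:ℝ) < |y|} := isOpen_lt continuous_const continuous_abs
      filter_upwards [hop.eventually_mem hs] with y hy
      rw [Phi_eq, if_pos hy]
    have hg : gPhi p n s = p * |s| ^ (p - 2) * s := by unfold gPhi; rw [if_pos hs]
    rw [hg]
    exact (hasDerivAt_abs_rpow s hp1).congr_of_eventuallyEq hev
  · -- boundary
    have hs0 : s ≠ 0 := by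
      intro h; rw [h, abs_zero] at hs; linarith
    have hnot : ¬ 1 / (n:ℝ) < |s| := by rw [hs]; exact lt_irrefl _
    have hg : gPhi p n s = gin p (n:ℝ) s := by unfold gPhi; rw [if_neg hnot]
    rw [hg]
    rcases hs0.lt_or_gt with hneg | hposs
    · -- s = -(1/n)
      have hsx : s = -(1 / (n:ℝ)) := by rw [abs_of_neg hneg] at hs; linarith
      have hnegs : -s = 1 / (n:ℝ) := by rw [hsx]; ring
      have hx2 : (n:ℝ) ^ 2 * s ^ 2 = 1 := by rw [hsx]; field_simp
      have hgin : gin p (n:ℝ) s = -(p * (n:ℝ) / (n:ℝ) ^ p) := by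
        unfold gin; rw [hx2, hsx]; field_simp; ring
      have hPinx : Pin p (n:ℝ) s = 1 / (n:ℝ) ^ p := by
        unfold Pin; rw [hx2]; norm_num
      have h₁ : HasDerivAt (fun y : ℝ => (-y) ^ p) (gin p (n:ℝ) s) s := by
        have base : HasDerivAt (fun y : ℝ => (-y) ^ p) (p * (-s) ^ (p - 1) * (-1)) s :=
          (Real.hasDerivAt_rpow_const (x := -s) (p := p)
            (Or.inl (neg_ne_zero.mpr hs0))).comp s (hasDerivAt_neg s)
        refine base.congr_deriv ?_
        rw [hnegs, one_div_rpow_eq hN, rpow_sub_one_eq hN, one_div_div, hgin]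
        ring
      have h₂ := Pin_hasDeriv p (n:ℝ) s
      have hle : ∀ᶠ y in nhds s, y ≤ s → Phi p n y = (-y) ^ p := by
        filter_upwards [isOpen_Iio.eventually_mem hneg] with y hy hyx
        rcases eq_or_lt_of_le hyx with heq | hlt
        · rw [heq, Phi_eq, if_neg hnot, hPinx, hnegs, one_div_rpow_eq hN]
        · have hcond : 1 / (n:ℝ) < |y| := by
            rw [abs_of_neg hy]; rw [← hnegs]; linarith
          rw [Phi_eq, if_pos hcond, abs_of_neg hy]
      have hge : ∀ᶠ y in nhds s, s ≤ y → Phi p n y = Pin p (n:ℝ) y := by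
        filter_upwards [isOpen_Iio.eventually_mem hneg] with y hy hxy
        have hcond : ¬ 1 / (n:ℝ) < |y| := by
          rw [abs_of_neg hy]; rw [← hnegs]; push_neg; linarith
        rw [Phi_eq, if_neg hcond]
      exact glueDeriv h₁ h₂ hle hge
    · -- s = 1/n
      have hsx : s = 1 / (n:ℝ) := by rw [abs_of_pos hposs] at hs; linarith
      have hx2 : (n:ℝ) ^ 2 * s ^ 2 = 1 := by rw [hsx]; field_simp
      have hgin : gin p (n:ℝ) s = p * (n:ℝ) / (n:ℝ) ^ p := by
        unfold gin; rw [hx2, hsx]; field_simp; ring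
      have hPinx : Pin p (n:ℝ) s = 1 / (n:ℝ) ^ p := by
        unfold Pin; rw [hx2]; norm_num
      have h₁ := Pin_hasDeriv p (n:ℝ) s
      have h₂ : HasDerivAt (fun y : ℝ => y ^ p) (gin p (n:ℝ) s) s := by
        refine (Real.hasDerivAt_rpow_const (x := s) (p := p) (Or.inl hs0)).congr_deriv ?_
        rw [hgin, hsx, one_div_rpow_eq hN, rpow_sub_one_eq hN, one_div_div]
        ring
      have hle : ∀ᶠ y in nhds s, y ≤ s → Phi p n y = Pin p (n:ℝ) y := by
        filter_upwards [isOpen_Ioi.eventually_mem hposs] with y hy hyx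
        have hcond : ¬ 1 / (n:ℝ) < |y| := by
          rw [abs_of_pos hy]; push_neg; rw [hsx] at hyx; linarith
        rw [Phi_eq, if_neg hcond]
      have hge : ∀ᶠ y in nhds s, s ≤ y → Phi p n y = y ^ p := by
        filter_upwards [isOpen_Ioi.eventually_mem hposs] with y hy hxy
        rcases eq_or_lt_of_le hxy with heq | hlt
        · rw [← heq, Phi_eq, if_neg hnot, hPinx, hsx, one_div_rpow_eq hN]
        · have hcond : 1 / (n:ℝ) < |y| := by
            rw [abs_of_pos hy]; rw [hsx] at hlt; linarith
          rw [Phi_eq, if_pos hcond, abs_of_pos hy]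
      exact glueDeriv h₁ h₂ hle hge
  · -- inner region
    have hev : Phi p n =ᶠ[nhds s] Pin p (n:ℝ) := by
      have hop : IsOpen {y : ℝ | |y| < 1 / (n:ℝ)} := isOpen_lt continuous_abs continuous_const
      filter_upwards [hop.eventually_mem hs] with y hy
      rw [Phi_eq, if_neg (not_lt.mpr hy.le)]
    have hg : gPhi p n s = gin p (n:ℝ) s := by
      unfold gPhi; rw [if_neg (not_lt.mpr hs.le)]
    rw [hg]
    exact (Pin_hasDeriv p (n:ℝ) s).congr_of_eventuallyEq hev

lemma hasDerivAt_gPhi' {p : ℝ} (hp1 : 1 < p) {n : ℕ} (hn : 0 < n) (s : ℝ) :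
    HasDerivAt (gPhi p n) (hPhi p n s) s := by
  have hN : (0:ℝ) < (n:ℝ) := Nat.cast_pos.mpr hn
  have hNp : (0:ℝ) < (n:ℝ) ^ p := Real.rpow_pos_of_pos hN p
  have hpos : (0:ℝ) < 1 / (n:ℝ) := by positivity
  rcases lt_trichotomy (1 / (n:ℝ)) |s| with hs | hs | hs
  · -- outer region
    have hs0 : s ≠ 0 := by
      intro h; rw [h, abs_zero] at hs; linarith
    have hev : gPhi p n =ᶠ[nhds s] fun y => p * (|y| ^ (p - 2) * y) := by
      have hop : IsOpen {y : ℝ | 1 / (n:ℝ) < |y|} := isOpen_lt continuous_const continuous_abs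
      filter_upwards [hop.eventually_mem hs] with y hy
      unfold gPhi; rw [if_pos hy]; ring
    have hg : hPhi p n s = p * (p - 1) * |s| ^ (p - 2) := by unfold hPhi; rw [if_pos hs]
    rw [hg]
    have base := (aux_abs_rpow_mul (p - 2) hs0).const_mul p
    refine (base.congr_deriv ?_).congr_of_eventuallyEq hev
    rw [show p - 2 + 1 = p - 1 by ring]; ring
  · -- boundary
    have hs0 : s ≠ 0 := by
      intro h; rw [h, abs_zero] at hs; linarith
    have hnot : ¬ 1 / (n:ℝ) < |s| := by rw [hs]; exact lt_irrefl _
    have hg : hPhi p n s = hin p (n:ℝ) s := by unfold hPhi; rw [if_neg hnot]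
    rw [hg]
    rcases hs0.lt_or_gt with hneg | hposs
    · -- s = -(1/n)
      have hsx : s = -(1 / (n:ℝ)) := by rw [abs_of_neg hneg] at hs; linarith
      have hnegs : -s = 1 / (n:ℝ) := by rw [hsx]; ring
      have hx2 : (n:ℝ) ^ 2 * s ^ 2 = 1 := by rw [hsx]; field_simp
      have hgin : gin p (n:ℝ) s = -(p * (n:ℝ) / (n:ℝ) ^ p) := by
        unfold gin; rw [hx2, hsx]; field_simp; ring
      have hhin : hin p (n:ℝ) s = p * (p - 1) * (n:ℝ) ^ 2 / (n:ℝ) ^ p := by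
        unfold hin; rw [hx2]; field_simp; ring
      have h₁ : HasDerivAt (fun y : ℝ => -(p * (-y) ^ (p - 1))) (hin p (n:ℝ) s) s := by
        have base0 : HasDerivAt (fun u : ℝ => p * u ^ (p - 1))
            (p * ((p - 1) * (-s) ^ (p - 1 - 1))) (-s) :=
          (Real.hasDerivAt_rpow_const (x := -s) (p := p - 1)
            (Or.inl (neg_ne_zero.mpr hs0))).const_mul p
        have base : HasDerivAt (fun y : ℝ => -(p * (-y) ^ (p - 1)))
            (-(p * ((p - 1) * (-s) ^ (p - 1 - 1)) * (-1))) s :=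
          (base0.comp s (hasDerivAt_neg s)).neg
        refine base.congr_deriv ?_
        rw [show p - 1 - 1 = p - 2 by ring, hnegs, one_div_rpow_eq hN,
          rpow_sub_two_eq hN, one_div_div, hhin]
        ring
      have h₂ := gin_hasDeriv p (n:ℝ) s
      have hle : ∀ᶠ y in nhds s, y ≤ s → gPhi p n y = -(p * (-y) ^ (p - 1)) := by
        filter_upwards [isOpen_Iio.eventually_mem hneg] with y hy hyx
        rcases eq_or_lt_of_le hyx with heq | hlt
        · rw [heq]
          unfold gPhi; rw [if_neg hnot, hgin, hnegs, one_div_rpow_eq hN,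
            rpow_sub_one_eq hN, one_div_div]
          ring
        · have hcond : 1 / (n:ℝ) < |y| := by
            rw [abs_of_neg hy]; rw [← hnegs]; linarith
          unfold gPhi; rw [if_pos hcond, abs_of_neg hy,
            show p - 1 = p - 2 + 1 by ring, Real.rpow_add_one (neg_ne_zero.mpr (ne_of_lt hy))]
          ring
      have hge : ∀ᶠ y in nhds s, s ≤ y → gPhi p n y = gin p (n:ℝ) y := by
        filter_upwards [isOpen_Iio.eventually_mem hneg] with y hy hxy
        have hcond : ¬ 1 / (n:ℝ) < |y| := by
          rw [abs_of_neg hy]; rw [← hnegs]; push_neg; linarith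
        unfold gPhi; rw [if_neg hcond]
      exact glueDeriv h₁ h₂ hle hge
    · -- s = 1/n
      have hsx : s = 1 / (n:ℝ) := by rw [abs_of_pos hposs] at hs; linarith
      have hx2 : (n:ℝ) ^ 2 * s ^ 2 = 1 := by rw [hsx]; field_simp
      have hgin : gin p (n:ℝ) s = p * (n:ℝ) / (n:ℝ) ^ p := by
        unfold gin; rw [hx2, hsx]; field_simp; ring
      have hhin : hin p (n:ℝ) s = p * (p - 1) * (n:ℝ) ^ 2 / (n:ℝ) ^ p := by
        unfold hin; rw [hx2]; field_simp; ring
      have h₁ := gin_hasDeriv p (n:ℝ) s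
      have h₂ : HasDerivAt (fun y : ℝ => p * y ^ (p - 1)) (hin p (n:ℝ) s) s := by
        have base : HasDerivAt (fun y : ℝ => p * y ^ (p - 1))
            (p * ((p - 1) * s ^ (p - 1 - 1))) s :=
          (Real.hasDerivAt_rpow_const (x := s) (p := p - 1) (Or.inl hs0)).const_mul p
        refine base.congr_deriv ?_
        rw [show p - 1 - 1 = p - 2 by ring, hhin, hsx, one_div_rpow_eq hN,
          rpow_sub_two_eq hN, one_div_div]
        ring
      have hle : ∀ᶠ y in nhds s, y ≤ s → gPhi p n y = gin p (n:ℝ) y := by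
        filter_upwards [isOpen_Ioi.eventually_mem hposs] with y hy hyx
        have hcond : ¬ 1 / (n:ℝ) < |y| := by
          rw [abs_of_pos hy]; push_neg; rw [hsx] at hyx; linarith
        unfold gPhi; rw [if_neg hcond]
      have hge : ∀ᶠ y in nhds s, s ≤ y → gPhi p n y = p * y ^ (p - 1) := by
        filter_upwards [isOpen_Ioi.eventually_mem hposs] with y hy hxy
        rcases eq_or_lt_of_le hxy with heq | hlt
        · rw [← heq]
          unfold gPhi; rw [if_neg hnot, hgin, hsx, one_div_rpow_eq hN,
            rpow_sub_one_eq hN, one_div_div]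
          ring
        · have hcond : 1 / (n:ℝ) < |y| := by
            rw [abs_of_pos hy]; rw [hsx] at hlt; linarith
          unfold gPhi; rw [if_pos hcond, abs_of_pos hy,
            show p - 1 = p - 2 + 1 by ring, Real.rpow_add_one (ne_of_gt hy)]
          ring
      exact glueDeriv h₁ h₂ hle hge
  · -- inner region
    have hev : gPhi p n =ᶠ[nhds s] gin p (n:ℝ) := by
      have hop : IsOpen {y : ℝ | |y| < 1 / (n:ℝ)} := isOpen_lt continuous_abs continuous_const
      filter_upwards [hop.eventually_mem hs] with y hy
      unfold gPhi; rw [if_neg (not_lt.mpr hy.le)]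
    have hg : hPhi p n s = hin p (n:ℝ) s := by
      unfold hPhi; rw [if_neg (not_lt.mpr hs.le)]
    rw [hg]
    exact (gin_hasDeriv p (n:ℝ) s).congr_of_eventuallyEq hev

lemma hCp_aux {p : ℝ} (hp1 : 1 < p) (hp2 : p < 2) :
    36 / ((p - 1) * (2 - p)) * p * ((p - 1) * ((2 - p) * (4 - p) / 8))
      = 9 * p * (4 - p) / 2 := by
  have hD1 : p - 1 ≠ 0 := by intro h; rw [sub_eq_zero] at h; linarith
  have hD2 : 2 - p ≠ 0 := by intro h; rw [sub_eq_zero] at h; linarith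
  field_simp
  ring

set_option maxHeartbeats 1000000 in
lemma inner_key {p t : ℝ} (hp1 : 1 < p) (hp2 : p < 2) (ht0 : 0 ≤ t) (ht1 : t ≤ 1) :
    t * p ^ 2 * ((p - 2) * (t - 1) / 2 + 1) ^ 2 ≤
      36 / ((p - 1) * (2 - p)) * (p * ((p - 2) * (3 * t - 1) / 2 + 1)) *
        (p * (p - 2) * (t - 1) ^ 2 / 8 + p * (t - 1) / 2 + 1) := by
  obtain ⟨A, hA⟩ : ∃ A : ℝ, A = (p - 2) * (t - 1) / 2 + 1 := ⟨_, rfl⟩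
  obtain ⟨B, hB⟩ : ∃ B : ℝ, B = (p - 2) * (3 * t - 1) / 2 + 1 := ⟨_, rfl⟩
  obtain ⟨Q, hQ⟩ : ∃ Q : ℝ, Q = p * (p - 2) * (t - 1) ^ 2 / 8 + p * (t - 1) / 2 + 1 := ⟨_, rfl⟩
  rw [← hA, ← hB, ← hQ]
  have h1 : (0:ℝ) ≤ (2 - p) * (1 - t) := mul_nonneg (by linarith) (by linarith)
  have h2 : (2 - p) * (1 - t) ≤ 1 := by nlinarith
  have hA1 : 1 ≤ A := by rw [hA]; nlinarith
  have hA2 : A ≤ 3 / 2 := by rw [hA]; nlinarith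
  have h3 : (0:ℝ) ≤ (2 - p) * (3 - 3 * t) := mul_nonneg (by linarith) (by linarith)
  have hBlb : p - 1 ≤ B := by rw [hB]; nlinarith
  have hq1 : (0:ℝ) ≤ (2 - p) * (1 - (t - 1) ^ 2) := mul_nonneg (by linarith) (by nlinarith)
  have hq2 : (0:ℝ) ≤ p * ((2 - p) * (1 - (t - 1) ^ 2) + 4 * t) :=
    mul_nonneg (by linarith) (by linarith)
  have hQlb : (2 - p) * (4 - p) / 8 ≤ Q := by rw [hQ]; nlinarith
  have hm : (0:ℝ) < (2 - p) * (4 - p) / 8 := by nlinarith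
  have hB0 : 0 < B := by linarith
  have hQ0 : 0 < Q := lt_of_lt_of_le hm hQlb
  have hp2sq : p ^ 2 ≤ 4 := by nlinarith
  have hA2sq : A ^ 2 ≤ 9 / 4 := by nlinarith
  have hX : p ^ 2 * A ^ 2 ≤ 9 := by
    have := mul_le_mul hp2sq hA2sq (sq_nonneg A) (by norm_num : (0:ℝ) ≤ 4)
    linarith
  have hXnn : 0 ≤ p ^ 2 * A ^ 2 := mul_nonneg (sq_nonneg p) (sq_nonneg A)
  have hlhs : t * p ^ 2 * A ^ 2 ≤ 9 := by
    have h9 : t * (p ^ 2 * A ^ 2) ≤ 1 * (p ^ 2 * A ^ 2) :=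
      mul_le_mul_of_nonneg_right ht1 hXnn
    nlinarith [h9]
  have hprod : (p - 1) * ((2 - p) * (4 - p) / 8) ≤ B * Q :=
    mul_le_mul hBlb hQlb (le_of_lt hm) (by linarith)
  have hCp := hCp_aux hp1 hp2
  calc t * p ^ 2 * A ^ 2 ≤ 9 := hlhs
    _ ≤ 9 * p * (4 - p) / 2 := by nlinarith [mul_nonneg (show (0:ℝ) ≤ p - 1 by linarith) (show (0:ℝ) ≤ 3 - p by linarith)]
    _ = 36 / ((p - 1) * (2 - p)) * p * ((p - 1) * ((2 - p) * (4 - p) / 8)) := hCp.symm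
    _ ≤ 36 / ((p - 1) * (2 - p)) * p * (B * Q) :=
        mul_le_mul_of_nonneg_left hprod (by
          have e1 : (0:ℝ) < p - 1 := by linarith
          have e2 : (0:ℝ) < 2 - p := by linarith
          positivity)
    _ = 36 / ((p - 1) * (2 - p)) * (p * B) * Q := by ring

theorem stmt_3 (p : ℝ) (hp1 : 1 < p) (hp2 : p < 2) :
    ∃ C > (0 : ℝ), ∀ n : ℕ, 0 < n → ∀ s : ℝ,
      |deriv (Phi p n) s| ^ 2 ≤ C * deriv (deriv (Phi p n)) s * Phi p n s := by
  have hC0 : (0:ℝ) < 36 / ((p - 1) * (2 - p)) := by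
    have e1 : (0:ℝ) < p - 1 := by linarith
    have e2 : (0:ℝ) < 2 - p := by linarith
    positivity
  refine ⟨36 / ((p - 1) * (2 - p)), hC0, ?_⟩
  intro n hn s
  have hN : (0:ℝ) < (n:ℝ) := Nat.cast_pos.mpr hn
  have hNp : (0:ℝ) < (n:ℝ) ^ p := Real.rpow_pos_of_pos hN p
  have hd1 : deriv (Phi p n) = gPhi p n := funext fun y => (hasDerivAt_Phi' hp1 hn y).deriv
  have hd2 : deriv (gPhi p n) s = hPhi p n s := (hasDerivAt_gPhi' hp1 hn s).deriv
  rw [hd1, hd2]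
  by_cases hs : 1 / (n:ℝ) < |s|
  · -- outer region
    have hs0 : (0:ℝ) < |s| := lt_trans (by positivity) hs
    have hgPhi : gPhi p n s = p * |s| ^ (p - 2) * s := by unfold gPhi; rw [if_pos hs]
    have hhPhi : hPhi p n s = p * (p - 1) * |s| ^ (p - 2) := by unfold hPhi; rw [if_pos hs]
    have hPhis : Phi p n s = |s| ^ p := by rw [Phi_eq, if_pos hs]
    rw [hgPhi, hhPhi, hPhis]
    have hrnn : (0:ℝ) ≤ |s| ^ (p - 2) := Real.rpow_nonneg (abs_nonneg s) _
    have eabs : |p * |s| ^ (p - 2) * s| = p * (|s| ^ (p - 2) * |s|) := by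
      rw [abs_mul, abs_mul, abs_of_pos (by linarith : (0:ℝ) < p), abs_of_nonneg hrnn]
      ring
    have key1 : |s| ^ (p - 2) * |s| = |s| ^ (p - 1) := by
      rw [← Real.rpow_add_one (ne_of_gt hs0)]; ring_nf
    have key2 : |s| ^ (p - 1) * |s| ^ (p - 1) = |s| ^ (p - 2) * |s| ^ p := by
      rw [← Real.rpow_add hs0, ← Real.rpow_add hs0]; ring_nf
    rw [eabs, key1]
    have lhs_eq : (p * |s| ^ (p - 1)) ^ 2 = p ^ 2 * (|s| ^ (p - 2) * |s| ^ p) := by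
      rw [← key2]; ring
    rw [lhs_eq]
    have pkey : p ^ 2 ≤ 36 / ((p - 1) * (2 - p)) * p * (p - 1) := by
      rw [div_mul_eq_mul_div, div_mul_eq_mul_div,
        le_div_iff₀ (mul_pos (by linarith : (0:ℝ) < p - 1) (by linarith : (0:ℝ) < 2 - p))]
      nlinarith [mul_nonneg (mul_nonneg (show (0:ℝ) ≤ p - 1 by linarith)
        (show (0:ℝ) ≤ p by linarith)) (show (0:ℝ) ≤ 36 - p * (2 - p) by nlinarith)]
    calc p ^ 2 * (|s| ^ (p - 2) * |s| ^ p)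
        ≤ (36 / ((p - 1) * (2 - p)) * p * (p - 1)) * (|s| ^ (p - 2) * |s| ^ p) :=
          mul_le_mul_of_nonneg_right pkey
            (mul_nonneg hrnn (Real.rpow_nonneg (abs_nonneg s) _))
      _ = 36 / ((p - 1) * (2 - p)) * (p * (p - 1) * |s| ^ (p - 2)) * |s| ^ p := by ring
  · -- inner region
    have habs : |s| ≤ 1 / (n:ℝ) := not_lt.1 hs
    have hgPhi : gPhi p n s = gin p (n:ℝ) s := by unfold gPhi; rw [if_neg hs]
    have hhPhi : hPhi p n s = hin p (n:ℝ) s := by unfold hPhi; rw [if_neg hs]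
    have hPhis : Phi p n s = Pin p (n:ℝ) s := by rw [Phi_eq, if_neg hs]
    rw [hgPhi, hhPhi, hPhis, sq_abs]
    have ht0 : (0:ℝ) ≤ (n:ℝ) ^ 2 * s ^ 2 := by positivity
    have hmul : (n:ℝ) * |s| ≤ 1 := by
      have := mul_le_mul_of_nonneg_left habs hN.le
      rwa [mul_one_div, div_self (ne_of_gt hN)] at this
    have ht1 : (n:ℝ) ^ 2 * s ^ 2 ≤ 1 := by
      nlinarith [sq_abs s, mul_nonneg hN.le (abs_nonneg s)]
    have key := inner_key hp1 hp2 ht0 ht1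
    have hne : ((n:ℝ) ^ p) ≠ 0 := ne_of_gt hNp
    have hne1 : p - 1 ≠ 0 := by intro h; rw [sub_eq_zero] at h; linarith
    have hne2 : (2:ℝ) - p ≠ 0 := by intro h; rw [sub_eq_zero] at h; linarith
    have e1 : gin p (n:ℝ) s ^ 2 = (n:ℝ) ^ 2 / ((n:ℝ) ^ p) ^ 2 *
        ((n:ℝ) ^ 2 * s ^ 2 * p ^ 2 * ((p - 2) * ((n:ℝ) ^ 2 * s ^ 2 - 1) / 2 + 1) ^ 2) := by
      unfold gin; field_simp
    have e2 : 36 / ((p - 1) * (2 - p)) * hin p (n:ℝ) s * Pin p (n:ℝ) s =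
        (n:ℝ) ^ 2 / ((n:ℝ) ^ p) ^ 2 *
        (36 / ((p - 1) * (2 - p)) * (p * ((p - 2) * (3 * ((n:ℝ) ^ 2 * s ^ 2) - 1) / 2 + 1)) *
          (p * (p - 2) * ((n:ℝ) ^ 2 * s ^ 2 - 1) ^ 2 / 8 + p * ((n:ℝ) ^ 2 * s ^ 2 - 1) / 2 + 1)) := by
      unfold hin Pin; field_simp
    rw [e1, e2]
    exact mul_le_mul_of_nonneg_left key (by positivity)
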